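/- Let p be odd, ζ ∈ Z_p with x^2 + ζ irreducible mod p, and A, B, C, A', B', C' ∈ Z_p with p^k | B, C, B', C'. If (x^2 + pA + ζ)^2 - p^2(Bx + C)^2 ≡ (x^2 + pA' + ζ)^2 - p^2(B'x + C')^2 (mod p^{2k+3}), then A ≡ A' (mod p^{2k+2}). -/

import Mathlib

open Polynomial

private lemma padic_pow_dvd_iff (p : ℕ) [Fact p.Prime] (n : ℕ) (x : ℤ_[p]) :
    PadicInt.toZModPow n x = 0 ↔ (p : ℤ_[p]) ^ n ∣ x := by
  rw [← RingHom.mem_ker, PadicInt.ker_toZModPow, Ideal.mem_span_singleton]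

private lemma padic_dvd_iff (p : ℕ) [Fact p.Prime] (x : ℤ_[p]) :
    PadicInt.toZMod x = 0 ↔ (p : ℤ_[p]) ∣ x := by
  rw [← RingHom.mem_ker, PadicInt.ker_toZMod, PadicInt.maximalIdeal_eq_span_p,
    Ideal.mem_span_singleton]

/-- Claim 2: if `x² + ζ` is irreducible mod `p`, `p^k ∣ B, C, B', C'`, and
`(x² + pA + ζ)² - p²(Bx + C)² ≡ (x² + pA' + ζ)² - p²(B'x + C')² (mod p^(2k+3))`
coefficientwise, then `A ≡ A' (mod p^(2k+2))`. -/
theorem stmt_11 (p : ℕ) [Fact p.Prime] (hodd : p ≠ 2) (ζ A B C' A' B' C'' : ℤ_[p]) (k : ℕ)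
    (hirr : Irreducible (X ^ 2 + C (PadicInt.toZMod ζ) : Polynomial (ZMod p)))
    (hB : (p : ℤ_[p]) ^ k ∣ B) (hC : (p : ℤ_[p]) ^ k ∣ C')
    (hB' : (p : ℤ_[p]) ^ k ∣ B') (hC' : (p : ℤ_[p]) ^ k ∣ C'')
    (hcong : ((X ^ 2 + C ((p : ℤ_[p]) * A + ζ)) ^ 2 -
          C ((p : ℤ_[p]) ^ 2) * (C B * X + C C') ^ 2).map
            (PadicInt.toZModPow (2 * k + 3)) =
        ((X ^ 2 + C ((p : ℤ_[p]) * A' + ζ)) ^ 2 -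
          C ((p : ℤ_[p]) ^ 2) * (C B' * X + C C'') ^ 2).map
            (PadicInt.toZModPow (2 * k + 3))) :
    (p : ℤ_[p]) ^ (2 * k + 2) ∣ (A - A') := by
  have hp : p.Prime := Fact.out
  obtain ⟨b, hb⟩ := hB
  obtain ⟨c, hc⟩ := hC
  obtain ⟨b', hb'⟩ := hB'
  obtain ⟨c', hc'⟩ := hC'
  set P : ℤ_[p] := (p : ℤ_[p]) with hP
  have hPne : P ≠ 0 := Nat.cast_ne_zero.mpr hp.ne_zero
  -- some basic facts in the residue field
  have h2p : ¬ (p : ℕ) ∣ 2 := by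
    intro h
    exact hodd ((Nat.prime_dvd_prime_iff_eq hp Nat.prime_two).mp h)
  have h2ne : (2 : ZMod p) ≠ 0 := by
    have := (ZMod.natCast_eq_zero_iff 2 p).not.mpr h2p
    simpa using this
  have hπP : PadicInt.toZMod P = 0 := by
    rw [padic_dvd_iff]
  have hunit2 : IsUnit (2 : ℤ_[p]) := by
    by_contra h
    have hmem : (2 : ℤ_[p]) ∈ IsLocalRing.maximalIdeal ℤ_[p] := h
    rw [PadicInt.maximalIdeal_eq_span_p, Ideal.mem_span_singleton] at hmem
    have : PadicInt.toZMod (2 : ℤ_[p]) = 0 := (padic_dvd_iff p _).mpr hmem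
    rw [map_ofNat] at this
    exact h2ne this
  -- the key non-square property
  have hkey : ∀ x y : ZMod p, x ^ 2 + (PadicInt.toZMod ζ) * y ^ 2 = 0 → x = 0 ∧ y = 0 := by
    intro x y hxy
    by_cases hy : y = 0
    · refine ⟨?_, hy⟩
      rw [hy] at hxy
      simpa [pow_eq_zero_iff] using hxy
    · exfalso
      have hz : (x / y) ^ 2 = -(PadicInt.toZMod ζ) := by
        rw [div_pow, div_eq_iff (pow_ne_zero 2 hy)]
        linear_combination hxy
      have hmul : (X - C (x / y)) * (X - C (-(x / y))) =
          (X ^ 2 - C ((x / y) ^ 2) : Polynomial (ZMod p)) := by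
        simp only [map_neg, map_pow]
        ring
      have hfac : (X ^ 2 + C (PadicInt.toZMod ζ) : Polynomial (ZMod p)) =
          (X - C (x / y)) * (X - C (-(x / y))) := by
        rw [hmul, hz, map_neg, sub_neg_eq_add]
      rcases hirr.isUnit_or_isUnit hfac with h | h
      · exact Polynomial.not_isUnit_X_sub_C _ h
      · exact Polynomial.not_isUnit_X_sub_C _ h
  -- extract coefficientwise congruences
  set φ := @PadicInt.toZModPow p _ (2 * k + 3) with hφ
  set u2 : ℤ_[p] := 2 * (P * A + ζ) - P ^ 2 * B ^ 2 - (2 * (P * A' + ζ) - P ^ 2 * B' ^ 2) with hu2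
  set u1 : ℤ_[p] := -(2 * P ^ 2 * B * C') - -(2 * P ^ 2 * B' * C'') with hu1
  set u0 : ℤ_[p] := (P * A + ζ) ^ 2 - P ^ 2 * C' ^ 2 - ((P * A' + ζ) ^ 2 - P ^ 2 * C'' ^ 2)
    with hu0
  have hsub : (((X ^ 2 + C (P * A + ζ)) ^ 2 - C (P ^ 2) * (C B * X + C C') ^ 2) -
      ((X ^ 2 + C (P * A' + ζ)) ^ 2 - C (P ^ 2) * (C B' * X + C C'') ^ 2)).map φ = 0 := by
    rw [Polynomial.map_sub, hcong, sub_self]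
  have hpoly : (((X ^ 2 + C (P * A + ζ)) ^ 2 - C (P ^ 2) * (C B * X + C C') ^ 2) -
      ((X ^ 2 + C (P * A' + ζ)) ^ 2 - C (P ^ 2) * (C B' * X + C C'') ^ 2)) =
      C u2 * X ^ 2 + C u1 * X + C u0 := by
    simp only [hu2, hu1, hu0, map_add, map_sub, map_mul, map_pow, map_neg, map_ofNat]
    ring
  rw [hpoly] at hsub
  have hcoeff : ∀ n, φ ((C u2 * X ^ 2 + C u1 * X + C u0).coeff n) = 0 := by
    intro n
    rw [← Polynomial.coeff_map, hsub, Polynomial.coeff_zero]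
  have hd2 : P ^ (2 * k + 3) ∣ u2 := by
    have h := hcoeff 2
    have hcc : (C u2 * X ^ 2 + C u1 * X + C u0).coeff 2 = u2 := by
      simp [coeff_C]
    rw [hcc] at h
    rw [← padic_pow_dvd_iff p (2 * k + 3)]
    exact h
  have hd1 : P ^ (2 * k + 3) ∣ u1 := by
    have h := hcoeff 1
    have hcc : (C u2 * X ^ 2 + C u1 * X + C u0).coeff 1 = u1 := by
      simp [coeff_C]
    rw [hcc] at h
    rw [← padic_pow_dvd_iff p (2 * k + 3)]
    exact h
  have hd0 : P ^ (2 * k + 3) ∣ u0 := by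
    have h := hcoeff 0
    have hcc : (C u2 * X ^ 2 + C u1 * X + C u0).coeff 0 = u0 := by
      simp [coeff_C]
    rw [hcc] at h
    rw [← padic_pow_dvd_iff p (2 * k + 3)]
    exact h
  clear hcoeff hsub hpoly hcong
  -- cancel powers of p
  have hPPne : P ^ (2 * k + 2) ≠ 0 := pow_ne_zero _ hPne
  have hcancel : ∀ x : ℤ_[p], P ^ (2 * k + 2) * P ∣ P ^ (2 * k + 2) * x → P ∣ x := by
    intro x h
    exact (mul_dvd_mul_iff_left hPPne).mp h
  have hpow32 : (P ^ (2 * k + 3) : ℤ_[p]) = P ^ (2 * k + 2) * P := by ring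
  -- first get p^(2k+1) ∣ A - A'
  have hAA : P ^ (2 * k + 1) ∣ A - A' := by
    have h1 : P ^ (2 * k + 2) ∣ u2 := (pow_dvd_pow P (by omega)).trans hd2
    have h2 : P ^ (2 * k + 2) ∣ 2 * (P * (A - A')) := by
      have : 2 * (P * (A - A')) = u2 + P ^ (2 * k + 2) * (b ^ 2 - b' ^ 2) := by
        rw [hu2, hb, hb']; ring
      rw [this]
      exact dvd_add h1 (Dvd.intro _ rfl)
    have h3 : P ^ (2 * k + 2) ∣ P * (A - A') := (hunit2.dvd_mul_left).mp h2
    have h4 : P * P ^ (2 * k + 1) ∣ P * (A - A') := by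
      have : P * P ^ (2 * k + 1) = P ^ (2 * k + 2) := by ring
      rw [this]; exact h3
    exact (mul_dvd_mul_iff_left hPne).mp h4
  obtain ⟨D, hD⟩ := hAA
  -- residue field equations
  have e1 : P ∣ 2 * D - (b ^ 2 - b' ^ 2) := by
    apply hcancel
    rw [← hpow32]
    have : P ^ (2 * k + 2) * (2 * D - (b ^ 2 - b' ^ 2)) = u2 := by
      rw [hu2, hb, hb']
      linear_combination (-2 * P) * hD
    rw [this]; exact hd2
  have e2 : P ∣ 2 * (b * c - b' * c') := by
    apply hcancel
    rw [← hpow32]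
    have : P ^ (2 * k + 2) * (2 * (b * c - b' * c')) = -u1 := by
      rw [hu1, hb, hc, hb', hc']; ring
    rw [this]; exact hd1.neg_right
  have e3 : P ∣ D * (P * (A + A') + 2 * ζ) - (c ^ 2 - c' ^ 2) := by
    apply hcancel
    rw [← hpow32]
    have : P ^ (2 * k + 2) * (D * (P * (A + A') + 2 * ζ) - (c ^ 2 - c' ^ 2)) = u0 := by
      rw [hu0, hc, hc']
      linear_combination (-(P * (P * (A + A') + 2 * ζ))) * hD
    rw [this]; exact hd0
  set π := @PadicInt.toZMod p _ with hπ
  set d := π D with hdd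
  set β := π b with hβ
  set β' := π b' with hβ'
  set γ := π c with hγ
  set γ' := π c' with hγ'
  set z := π ζ with hzz
  have f1 : 2 * d - (β ^ 2 - β' ^ 2) = 0 := by
    have := (padic_dvd_iff p _).mpr e1
    simpa [map_sub, map_mul, map_pow, map_ofNat] using this
  have f2 : β * γ = β' * γ' := by
    have := (padic_dvd_iff p _).mpr e2
    simp only [map_sub, map_mul, map_pow, map_ofNat] at this
    rcases mul_eq_zero.mp this with h | h
    · exact absurd h h2ne
    · exact sub_eq_zero.mp h
  have f3 : 2 * d * z - (γ ^ 2 - γ' ^ 2) = 0 := by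
    have := (padic_dvd_iff p _).mpr e3
    simp only [map_sub, map_mul, map_add, map_pow, map_ofNat, hπP] at this
    have hP0 : PadicInt.toZMod P = 0 := hπP
    linear_combination this - d * (PadicInt.toZMod A + PadicInt.toZMod A') * hP0
  -- show d = 0
  have hdzero : d = 0 := by
    by_contra hd0'
    have huv : β ^ 2 - β' ^ 2 ≠ 0 := by
      intro h
      have h2d : 2 * d = 0 := by linear_combination f1 + h
      rcases mul_eq_zero.mp h2d with h' | h'
      · exact h2ne h'
      · exact hd0' h'
    have hs : γ ^ 2 - γ' ^ 2 = z * (β ^ 2 - β' ^ 2) := by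
      linear_combination z * f1 - f3
    have hus : β ^ 2 * γ ^ 2 = β' ^ 2 * γ' ^ 2 := by
      have := congrArg (· ^ 2) f2
      simpa [mul_pow] using this
    have ht : γ' ^ 2 * (β ^ 2 - β' ^ 2) = -(z * β ^ 2) * (β ^ 2 - β' ^ 2) := by
      linear_combination hus - β ^ 2 * hs
    have ht' : γ' ^ 2 = -(z * β ^ 2) := mul_right_cancel₀ huv ht
    have hkey1 : γ' = 0 ∧ β = 0 := by
      apply hkey
      linear_combination ht'
    obtain ⟨hγ'0, hβ0⟩ := hkey1
    have hs' : γ ^ 2 + z * β' ^ 2 = 0 := by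
      rw [hβ0, hγ'0] at hs
      linear_combination hs
    obtain ⟨hγ0, hβ'0⟩ := hkey _ _ hs'
    rw [hβ0, hβ'0] at huv
    simp at huv
  -- conclude
  have hpD : P ∣ D := by
    rw [← padic_dvd_iff]
    exact hdzero
  obtain ⟨E, hE⟩ := hpD
  rw [hD, hE]
  exact ⟨E, by ring⟩
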